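/- Let p be a prime ideal of R. The sum of a family of p-second submodules of an R-module M is again a p-second submodule (provided the family is nonempty with each member nonzero). -/

import Mathlib

open Pointwise

variable {R : Type*} [CommRing R] {M : Type*} [AddCommGroup M] [Module R M]

/-- A submodule `S` is *second* if `S ≠ 0` and for every `r : R`, `r • S = S` or `r • S = 0`. -/
def IsSecondSubmodule (S : Submodule R M) : Prop :=
  S ≠ ⊥ ∧ ∀ r : R, r • S = S ∨ r • S = ⊥

/-- `S` is a *p-second* submodule if it is second with annihilator `p`. -/
def IsPSecondSubmodule (p : Ideal R) (S : Submodule R M) : Prop :=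
  IsSecondSubmodule S ∧ S.annihilator = p

lemma pointwise_smul_eq_map' (r : R) (S : Submodule R M) :
    r • S = S.map (DistribMulAction.toLinearMap R M r) := rfl

lemma smul_eq_bot_iff_mem_annihilator (r : R) (S : Submodule R M) :
    r • S = ⊥ ↔ r ∈ S.annihilator := by
  constructor
  · intro h
    rw [Submodule.mem_annihilator]
    intro n hn
    have := Submodule.smul_mem_pointwise_smul n r S hn
    rw [h] at this
    simpa using this
  · intro h
    rw [Submodule.mem_annihilator] at h
    rw [eq_bot_iff]
    intro x hx
    rw [pointwise_smul_eq_map', Submodule.mem_map] at hx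
    obtain ⟨y, hy, rfl⟩ := hx
    exact (Submodule.mem_bot R).mpr (h y hy)

lemma pointwise_smul_iSup' {ι : Type*} (r : R) (S : ι → Submodule R M) :
    r • (⨆ i, S i) = ⨆ i, r • S i := by
  simp_rw [pointwise_smul_eq_map']
  exact Submodule.map_iSup _ _

theorem iSup_isPSecond {ι : Type*} [Nonempty ι] (p : Ideal R) (hp : p.IsPrime)
    (S : ι → Submodule R M) (hS : ∀ i, IsPSecondSubmodule p (S i)) :
    IsPSecondSubmodule p (⨆ i, S i) := by
  obtain ⟨i₀⟩ := ‹Nonempty ι›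
  have hann : (⨆ i, S i).annihilator = p := by
    rw [Submodule.annihilator_iSup]
    simp [(fun i => (hS i).2 : ∀ i, (S i).annihilator = p)]
  refine ⟨⟨fun h => (hS i₀).1.1 (le_bot_iff.mp (h ▸ le_iSup S i₀)), fun r => ?_⟩, hann⟩
  by_cases hr : r ∈ p
  · exact Or.inr ((smul_eq_bot_iff_mem_annihilator r _).mpr (hann ▸ hr))
  · left
    rw [pointwise_smul_iSup']
    congr 1
    funext i
    rcases (hS i).1.2 r with h | h
    · exact h
    · exact absurd ((hS i).2 ▸ (smul_eq_bot_iff_mem_annihilator r (S i)).mp h) hr
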